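/- Let E and D be C*-algebras and let q : E → D be a surjective *-homomorphism; write I = ker q, a closed two-sided star-closed ideal of E. Suppose that for each X ∈ {I, E, D} a property P_X of separable C*-algebras is given which is preserved under sequential inductive limits with injective connecting maps, and that I separably satisfies P_I, E separably satisfies P_E, and D separably satisfies P_D. Then for any given separable closed star-subalgebras I₀ ⊆ I, E₀ ⊆ E, and D₀ ⊆ D, there exist separable closed star-subalgebras Î ⊆ I, Ê ⊆ E, and D̂ ⊆ D such that: Î satisfies P_I and contains I₀; Ê satisfies P_E and contains E₀; D̂ satisfies P_D and contains D₀; the image q(Ê) equals D̂; and Î = Ê ∩ I (equivalently, Î = {x ∈ Ê : q(x) = 0}), so that the inclusions give a homomorphism from the extension 0 → Î → Ê → D̂ → 0 into the extension 0 → I → E → D → 0. -/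

import Mathlib

open TopologicalSpace

universe u

/-- A property of C*-algebras: a predicate on (non-unital) C*-algebras. -/
abbrev CStarProp : Type (u + 1) := ∀ (B : Type u) [NonUnitalCStarAlgebra B], Prop

/-- Invariance of a property of C*-algebras under *-isomorphism. -/
def CStarProp.IsoInvariant (P : CStarProp.{u}) : Prop :=
  ∀ (B C : Type u) [NonUnitalCStarAlgebra B] [NonUnitalCStarAlgebra C],
    (B ≃⋆ₐ[ℂ] C) → P B → P C

/-- `P` holds for a closed star-subalgebra of a C*-algebra, regarded as a
C*-algebra in its own right. -/
def SatSub {A : Type u} [NonUnitalCStarAlgebra A] (P : CStarProp.{u})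
    (S : NonUnitalStarSubalgebra ℂ A) (hS : IsClosed (S : Set A)) : Prop :=
  letI : IsClosed (S : Set A) := hS
  P S

/-- `P` is preserved under sequential inductive limits with injective connecting maps:
for every C*-algebra `C` and every increasing sequence of separable closed
star-subalgebras of `C` each satisfying `P`, the closure of their union satisfies `P`. -/
def LimitClosed (P : CStarProp.{u}) : Prop :=
  ∀ (C : Type u) [NonUnitalCStarAlgebra C] (S : ℕ → NonUnitalStarSubalgebra ℂ C),
    Monotone S →
    ∀ (hcl : ∀ n, IsClosed (S n : Set C)),
    (∀ n, SeparableSpace (S n)) →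
    (∀ n, SatSub P (S n) (hcl n)) →
    ∀ (T : NonUnitalStarSubalgebra ℂ C) (hT : (T : Set C) = closure (⋃ n, (S n : Set C))),
      SatSub P T (by rw [hT]; exact isClosed_closure)

/-- `A` separably satisfies `P`: every separable closed star-subalgebra of `A` is
contained in a separable closed star-subalgebra of `A` satisfying `P`. -/
def SepSat (P : CStarProp.{u}) (A : Type u) [NonUnitalCStarAlgebra A] : Prop :=
  ∀ S₀ : NonUnitalStarSubalgebra ℂ A, IsClosed (S₀ : Set A) → SeparableSpace S₀ →
    ∃ (S : NonUnitalStarSubalgebra ℂ A) (hS : IsClosed (S : Set A)),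
      SeparableSpace S ∧ S₀ ≤ S ∧ SatSub P S hS



open scoped NNReal
open Filter

section Aux


lemma isSeparable_subsemigroupClosure {M : Type*} [Mul M] [TopologicalSpace M]
    [ContinuousMul M] {s : Set M} (hs : IsSeparable s) :
    IsSeparable (Subsemigroup.closure s : Set M) := by
  let u : ℕ → Set M := fun n =>
    Nat.rec s (fun _ t => t ∪ (fun p : M × M => p.1 * p.2) '' (t ×ˢ t)) n
  have hu : ∀ n, IsSeparable (u n) := by
    intro n
    induction n with
    | zero => exact hs
    | succ n ih => exact ih.union ((ih.prod ih).image (by fun_prop))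
  have hmono : Monotone u := monotone_nat_of_le_succ fun n => Set.subset_union_left
  have hS : ∀ {a b : M}, a ∈ ⋃ n, u n → b ∈ ⋃ n, u n → a * b ∈ ⋃ n, u n := by
    intro a b ha hb
    obtain ⟨m, hm⟩ := Set.mem_iUnion.mp ha
    obtain ⟨k, hk⟩ := Set.mem_iUnion.mp hb
    refine Set.mem_iUnion.mpr ⟨max m k + 1, Set.mem_union_right _ ?_⟩
    exact ⟨(a, b), Set.mk_mem_prod (hmono (le_max_left m k) hm)
      (hmono (le_max_right m k) hk), rfl⟩
  have hsub : (Subsemigroup.closure s : Set M) ⊆ ⋃ n, u n := by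
    have := Subsemigroup.closure_le (S := ⟨⋃ n, u n, hS⟩) (s := s)
      |>.mpr (Set.subset_iUnion u 0)
    exact this
  exact (IsSeparable.iUnion hu).mono hsub

lemma isSeparable_adjoin {A : Type*} [NonUnitalCStarAlgebra A] {s : Set A}
    (hs : IsSeparable s) :
    IsSeparable (NonUnitalStarAlgebra.adjoin ℂ s : Set A) := by
  have h1 : IsSeparable (s ∪ star s) := hs.union (by
    have : (star s : Set A) = star '' s := by
      ext x
      simp only [Set.mem_star, Set.mem_image]
      exact ⟨fun h => ⟨star x, h, by simp⟩, fun ⟨y, hy, hxy⟩ => by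
        rw [← hxy]; simpa using hy⟩
    rw [this]; exact hs.image continuous_star)
  have h2 := (isSeparable_subsemigroupClosure h1).span (R := ℂ)
  have h3 : (NonUnitalStarAlgebra.adjoin ℂ s : Set A)
      = (Submodule.span ℂ (Subsemigroup.closure (s ∪ star s) : Set A) : Set A) := by
    have := NonUnitalStarAlgebra.adjoin_eq_span (R := ℂ) (A := A) s
    exact congrArg SetLike.coe this
  rw [h3]; exact h2



variable {A B : Type*} [NonUnitalCStarAlgebra A] [NonUnitalCStarAlgebra B]

lemma quasispectrum_star_mul_self_nonneg' (a : A) :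
    ∀ x ∈ quasispectrum ℝ (star a * a), 0 ≤ x := by
  rw [Unitization.quasispectrum_eq_spectrum_inr' ℝ ℂ]
  intro x hx
  rw [Unitization.inr_mul, Unitization.inr_star] at hx
  exact spectrum_star_mul_self_nonneg x hx

lemma quasispectrum_star_mul_self_le' (a : A) :
    ∀ x ∈ quasispectrum ℝ (star a * a), x ≤ ‖star a * a‖ := by
  have h1 := quasispectrum_star_mul_self_nonneg' a
  have h2 : QuasispectrumRestricts (star a * a) ContinuousMap.realToNNReal :=
    QuasispectrumRestricts.nnreal_iff.mpr h1
  have := (QuasispectrumRestricts.le_nnreal_iff h2 (r := ‖star a * a‖₊)).mp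
    (fun x hx => CStarAlgebra.le_nnnorm_of_mem_quasispectrum hx)
  intro x hx
  simpa [coe_nnnorm] using this x hx

lemma exists_kernel_approx (q : A →⋆ₙₐ[ℂ] B) (S : NonUnitalStarSubalgebra ℂ A)
    (hS : IsClosed (S : Set A)) {a : A} (ha : a ∈ S) {ε : ℝ} (hε : 0 < ε) :
    ∃ b ∈ S, q b = 0 ∧ ‖a - b‖ ≤ ‖q a‖ + ε := by
  have hqc : Continuous q := AddMonoidHomClass.continuous_of_bound q 1
    (by simpa using fun x => NonUnitalStarAlgHom.norm_apply_le q x)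
  set t : ℝ := ‖q a‖ with ht
  have ht0 : 0 ≤ t := norm_nonneg _
  set δ : ℝ := (t + ε) ^ 2 with hδ
  have hδ0 : 0 < δ := by positivity
  set f : ℝ → ℝ := fun s => max (s - δ) 0 / max s δ with hf
  have hfc : Continuous f := by
    apply Continuous.div (by fun_prop) (by fun_prop)
    intro s; exact ne_of_gt (lt_max_iff.mpr (Or.inr hδ0))
  have hf0 : f 0 = 0 := by
    simp only [hf, zero_sub, max_eq_right (neg_nonpos.mpr hδ0.le), zero_div]
  set z : A := star a * a with hz
  have hzS : z ∈ S := mul_mem (star_mem ha) ha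
  have hzsa : IsSelfAdjoint z := IsSelfAdjoint.star_mul_self a
  set c : A := cfcₙ f z with hc
  have hcsa : IsSelfAdjoint c := cfcₙ_predicate f z
  -- membership of c in S
  have hcS : c ∈ S := by
    let ι : S →⋆ₙₐ[ℂ] A := NonUnitalStarSubalgebraClass.subtype S
    have hιc : Continuous ι := continuous_subtype_val
    have hz' : IsSelfAdjoint (⟨z, hzS⟩ : S) := by
      rw [isSelfAdjoint_iff]; exact Subtype.ext hzsa.star_eq
    have hmap := NonUnitalStarAlgHomClass.map_cfcₙ (S := ℂ) ι f (⟨z, hzS⟩ : S)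
      (hfc.continuousOn) hf0 hιc hz' hzsa
    have heq : cfcₙ f z = ι (cfcₙ f (⟨z, hzS⟩ : S)) := by rw [hmap]; rfl
    rw [hc, heq]
    exact (cfcₙ f (⟨z, hzS⟩ : S)).2
  -- q c = 0
  have hqz : q z = star (q a) * q a := by rw [hz, map_mul, map_star]
  have hqzsa : IsSelfAdjoint (q z) := hzsa.map q
  have hqc0 : q c = 0 := by
    have hmap := NonUnitalStarAlgHomClass.map_cfcₙ (S := ℂ) q f z
      (hfc.continuousOn) hf0 hqc hzsa hqzsa
    rw [hc, hmap]
    have hvanish : (quasispectrum ℝ (q z)).EqOn f 0 := by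
      intro x hx
      have hb : x ≤ ‖star (q a) * q a‖ := by
        rw [hqz] at hx; exact quasispectrum_star_mul_self_le' (q a) x hx
      have : x ≤ t ^ 2 := by
        rwa [CStarRing.norm_star_mul_self, ← sq, ← ht] at hb
      have hxδ : x - δ ≤ 0 := by nlinarith
      show max (x - δ) 0 / max x δ = 0
      rw [max_eq_right hxδ, zero_div]
    calc cfcₙ f (q z) = cfcₙ (0 : ℝ → ℝ) (q z) := cfcₙ_congr hvanish
      _ = 0 := cfcₙ_zero ℝ (q z)
  refine ⟨a * c, mul_mem ha hcS, by rw [map_mul, hqc0, mul_zero], ?_⟩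
  -- norm estimate
  have hkey : star (a - a * c) * (a - a * c) = cfcₙ (fun s => s * (1 - f s) ^ 2) z := by
    have e1 : cfcₙ (fun s : ℝ => s * f s) z = z * c := by
      rw [hc, cfcₙ_mul (fun s : ℝ => s) f z (by fun_prop) rfl (hfc.continuousOn) hf0,
        cfcₙ_id' (R := ℝ) z hzsa]
    have e2 : cfcₙ (fun s : ℝ => f s * s) z = c * z := by
      rw [hc, cfcₙ_mul f (fun s : ℝ => s) z (hfc.continuousOn) hf0 (by fun_prop) rfl,
        cfcₙ_id' (R := ℝ) z hzsa]
    have e3 : cfcₙ (fun s : ℝ => f s * (s * f s)) z = c * (z * c) := by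
      rw [← e1, hc]
      rw [← cfcₙ_mul f (fun s : ℝ => s * f s) z (hfc.continuousOn) hf0
        (by fun_prop) (by simp [hf0])]
    have e4 : cfcₙ (fun s : ℝ => s * (1 - f s) ^ 2) z
        = cfcₙ (fun s : ℝ => (s - s * f s) - (f s * s - f s * (s * f s))) z := by
      apply cfcₙ_congr; intro x _; show x * (1 - f x) ^ 2 = _; ring
    rw [e4]
    rw [cfcₙ_sub (fun s : ℝ => s - s * f s) (fun s : ℝ => f s * s - f s * (s * f s)) z
      (by fun_prop) (by simp [hf0]) (by fun_prop) (by simp [hf0])]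
    rw [cfcₙ_sub (fun s : ℝ => s) (fun s : ℝ => s * f s) z
      (by fun_prop) rfl (by fun_prop) (by simp [hf0])]
    rw [cfcₙ_sub (fun s : ℝ => f s * s) (fun s : ℝ => f s * (s * f s)) z
      (by fun_prop) (by simp [hf0]) (by fun_prop) (by simp [hf0])]
    rw [e1, e2, e3, cfcₙ_id' (R := ℝ) z hzsa]
    rw [hz, star_sub, star_mul, hcsa.star_eq]
    noncomm_ring
  have hbound : ‖cfcₙ (fun s => s * (1 - f s) ^ 2) z‖ ≤ δ := by
    apply norm_cfcₙ_le
    intro x hx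
    have hx0 : 0 ≤ x := quasispectrum_star_mul_self_nonneg' a x (by rwa [← hz])
    rw [Real.norm_eq_abs]
    by_cases hxδ : x ≤ δ
    · have hfx : f x = 0 := by
        show max (x - δ) 0 / max x δ = 0
        rw [max_eq_right (sub_nonpos.mpr hxδ), zero_div]
      rw [hfx]
      rw [show x * (1 - (0:ℝ)) ^ 2 = x by ring, abs_of_nonneg hx0]
      exact hxδ
    · push_neg at hxδ
      have hx0' : 0 < x := lt_trans hδ0 hxδ
      have hfx : f x = (x - δ) / x := by
        show max (x - δ) 0 / max x δ = _
        rw [max_eq_left (sub_nonneg.mpr hxδ.le), max_eq_left hxδ.le]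
      have h1 : 1 - f x = δ / x := by rw [hfx]; field_simp; ring
      rw [h1, show x * (δ / x) ^ 2 = δ ^ 2 / x by field_simp,
        abs_of_nonneg (by positivity), div_le_iff₀ hx0']
      nlinarith
  have hsq := CStarRing.norm_star_mul_self (x := a - a * c)
  rw [hkey] at hsq
  have hnorm : ‖a - a * c‖ ^ 2 ≤ δ := by
    rw [sq, ← hsq]; exact hbound
  nlinarith [norm_nonneg (a - a * c)]



variable {A B : Type*} [NonUnitalCStarAlgebra A] [NonUnitalCStarAlgebra B]


lemma isClosed_image_of_isClosed (q : A →⋆ₙₐ[ℂ] B) (S : NonUnitalStarSubalgebra ℂ A)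
    (hS : IsClosed (S : Set A)) : IsClosed (q '' (S : Set A)) := by
  have hqc : Continuous q := AddMonoidHomClass.continuous_of_bound q 1
    (by simpa using fun x => NonUnitalStarAlgHom.norm_apply_le q x)
  refine isClosed_of_closure_subset fun d hd => ?_
  have hA : ∀ n : ℕ, ∃ x ∈ (S : Set A), ‖q x - d‖ < (2⁻¹ : ℝ) ^ n := by
    intro n
    obtain ⟨y, ⟨x, hxS, rfl⟩, hy⟩ :=
      Metric.mem_closure_iff.mp hd ((2⁻¹ : ℝ) ^ n) (by positivity)
    exact ⟨x, hxS, by rwa [dist_comm, dist_eq_norm] at hy⟩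
  choose u huS hud using hA
  have hC : ∀ n : ℕ, ∃ b ∈ S, q b = 0 ∧ ‖(u (n + 1) - u n) - b‖ ≤ 3 * (2⁻¹ : ℝ) ^ n := by
    intro n
    obtain ⟨b, hbS, hbk, hb⟩ := exists_kernel_approx q S hS
      (sub_mem (huS (n + 1)) (huS n)) (show (0:ℝ) < (2⁻¹ : ℝ) ^ n by positivity)
    refine ⟨b, hbS, hbk, hb.trans ?_⟩
    have h1 : ‖q (u (n + 1) - u n)‖ ≤ ‖q (u (n + 1)) - d‖ + ‖d - q (u n)‖ := by
      rw [map_sub]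
      simpa using norm_sub_le_norm_sub_add_norm_sub (q (u (n+1))) d (q (u n))
    have h2 := hud (n + 1)
    have h3 := hud n
    rw [norm_sub_rev (d)] at h1
    have hp : (2⁻¹ : ℝ) ^ (n + 1) ≤ (2⁻¹ : ℝ) ^ n := by
      rw [pow_succ]
      nlinarith [pow_pos (show (0:ℝ) < 2⁻¹ by norm_num) n]
    nlinarith
  choose c hcS hck hc using hC
  set b : ℕ → A := fun n => u n - ∑ k ∈ Finset.range n, c k with hb
  have hbS : ∀ n, b n ∈ S := fun n => sub_mem (huS n) (sum_mem fun k _ => hcS k)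
  have hdiff : ∀ n, b (n + 1) - b n = (u (n + 1) - u n) - c n := by
    intro n
    simp only [hb, Finset.sum_range_succ]
    abel
  have hcauchy : CauchySeq b := by
    apply cauchySeq_of_le_geometric 2⁻¹ 3 (by norm_num)
    intro n
    rw [dist_eq_norm, norm_sub_rev, hdiff n]
    exact hc n
  obtain ⟨x, hx⟩ := cauchySeq_tendsto_of_complete hcauchy
  have hxS : x ∈ S := hS.mem_of_tendsto hx (Eventually.of_forall hbS)
  refine ⟨x, hxS, ?_⟩
  have h1 : Tendsto (fun n => q (b n)) atTop (nhds (q x)) := (hqc.tendsto x).comp hx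
  have h2 : ∀ n, q (b n) = q (u n) := by
    intro n
    rw [hb]
    simp only [map_sub, map_sum]
    rw [Finset.sum_congr rfl fun k _ => hck k]
    simp
  have h3 : Tendsto (fun n => q (u n)) atTop (nhds d) := by
    rw [tendsto_iff_norm_sub_tendsto_zero]
    apply squeeze_zero (fun n => norm_nonneg _) (fun n => (hud n).le)
    exact tendsto_pow_atTop_nhds_zero_of_lt_one (by norm_num) (by norm_num)
  rw [show (fun n => q (b n)) = fun n => q (u n) from funext h2] at h1
  exact tendsto_nhds_unique h1 h3



variable {A B : Type*} [NonUnitalCStarAlgebra A] [NonUnitalCStarAlgebra B]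

/-- Kernel of a star hom as a non-unital star subalgebra. -/
def kerSub (q : A →⋆ₙₐ[ℂ] B) : NonUnitalStarSubalgebra ℂ A where
  carrier := {x | q x = 0}
  add_mem' := fun hx hy => by simp only [Set.mem_setOf_eq, map_add] at *; rw [hx, hy, add_zero]
  zero_mem' := by simp
  mul_mem' := fun hx hy => by simp only [Set.mem_setOf_eq, map_mul] at *; rw [hx, zero_mul]
  smul_mem' := fun r x hx => by simp only [Set.mem_setOf_eq, map_smul] at *; rw [hx, smul_zero]
  star_mem' := fun hx => by simp only [Set.mem_setOf_eq, map_star] at *; rw [hx, star_zero]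

lemma mem_kerSub {q : A →⋆ₙₐ[ℂ] B} {x : A} : x ∈ kerSub q ↔ q x = 0 := Iff.rfl

lemma isClosed_kerSub (q : A →⋆ₙₐ[ℂ] B) : IsClosed ((kerSub q : NonUnitalStarSubalgebra ℂ A) : Set A) := by
  have hqc : Continuous q := AddMonoidHomClass.continuous_of_bound q 1
    (by simpa using fun x => NonUnitalStarAlgHom.norm_apply_le q x)
  exact isClosed_eq hqc continuous_const

/-- The union of a monotone sequence of non-unital star subalgebras. -/
def unionSub (S : ℕ → NonUnitalStarSubalgebra ℂ A) (hS : Monotone S) :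
    NonUnitalStarSubalgebra ℂ A where
  carrier := ⋃ n, (S n : Set A)
  add_mem' := fun hx hy => by
    obtain ⟨m, hm⟩ := Set.mem_iUnion.mp hx
    obtain ⟨k, hk⟩ := Set.mem_iUnion.mp hy
    exact Set.mem_iUnion.mpr ⟨max m k, add_mem (hS (le_max_left m k) hm) (hS (le_max_right m k) hk)⟩
  zero_mem' := Set.mem_iUnion.mpr ⟨0, zero_mem (S 0)⟩
  mul_mem' := fun hx hy => by
    obtain ⟨m, hm⟩ := Set.mem_iUnion.mp hx
    obtain ⟨k, hk⟩ := Set.mem_iUnion.mp hy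
    exact Set.mem_iUnion.mpr ⟨max m k, mul_mem (hS (le_max_left m k) hm) (hS (le_max_right m k) hk)⟩
  smul_mem' := fun r x hx => by
    obtain ⟨m, hm⟩ := Set.mem_iUnion.mp hx
    exact Set.mem_iUnion.mpr ⟨m, SMulMemClass.smul_mem r hm⟩
  star_mem' := fun hx => by
    obtain ⟨m, hm⟩ := Set.mem_iUnion.mp ‹_›
    exact Set.mem_iUnion.mpr ⟨m, star_mem hm⟩

lemma coe_unionSub (S : ℕ → NonUnitalStarSubalgebra ℂ A) (hS : Monotone S) :
    ((unionSub S hS : NonUnitalStarSubalgebra ℂ A) : Set A) = ⋃ n, (S n : Set A) := rfl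

lemma coe_topologicalClosure (S : NonUnitalStarSubalgebra ℂ A) :
    (S.topologicalClosure : Set A) = closure (S : Set A) := rfl

open TopologicalSpace in
lemma sepSpace_iff_isSeparable (S : NonUnitalStarSubalgebra ℂ A) :
    SeparableSpace S ↔ IsSeparable (S : Set A) := by
  constructor
  · intro h
    exact @IsSeparable.of_subtype A _ (S : Set A) h
  · intro h
    exact h.separableSpace

end Aux

section Step

universe v

open TopologicalSpace

/-- A triple of closed separable subalgebras with the required properties. -/
structure GoodTriple {E D : Type u} [NonUnitalCStarAlgebra E] [NonUnitalCStarAlgebra D]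
    (q : E →⋆ₙₐ[ℂ] D) (PI PE PD : CStarProp.{u}) where
  I : NonUnitalStarSubalgebra ℂ E
  EE : NonUnitalStarSubalgebra ℂ E
  DD : NonUnitalStarSubalgebra ℂ D
  hIc : IsClosed (I : Set E)
  hEc : IsClosed (EE : Set E)
  hDc : IsClosed (DD : Set D)
  hIs : SeparableSpace I
  hEs : SeparableSpace EE
  hDs : SeparableSpace DD
  hIker : (I : Set E) ⊆ {x | q x = 0}
  hIP : SatSub PI I hIc
  hEP : SatSub PE EE hEc
  hDP : SatSub PD DD hDc

variable {E D : Type u} [NonUnitalCStarAlgebra E] [NonUnitalCStarAlgebra D]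
  {q : E →⋆ₙₐ[ℂ] D} {PI PE PD : CStarProp.{u}}

/-- The relation between consecutive stages of the construction. -/
def StepRel (p p' : GoodTriple q PI PE PD) : Prop :=
  p.I ≤ p'.I ∧ p.EE ≤ p'.EE ∧ p.DD ≤ p'.DD ∧ p.I ≤ p'.EE ∧
    ((p'.EE : Set E) ∩ {x | q x = 0} ⊆ (p'.I : Set E)) ∧
    ((p.DD : Set D) ⊆ q '' (p'.EE : Set E)) ∧ (q '' (p'.EE : Set E) ⊆ (p'.DD : Set D))

lemma step_exists (hq : Function.Surjective q)
    (hIsep : ∀ S₀ : NonUnitalStarSubalgebra ℂ E, (S₀ : Set E) ⊆ {x | q x = 0} →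
      IsClosed (S₀ : Set E) → SeparableSpace S₀ →
      ∃ (S : NonUnitalStarSubalgebra ℂ E) (hS : IsClosed (S : Set E)),
        (S : Set E) ⊆ {x | q x = 0} ∧ SeparableSpace S ∧ S₀ ≤ S ∧ SatSub PI S hS)
    (hEsep : SepSat PE E) (hDsep : SepSat PD D)
    (p : GoodTriple q PI PE PD) : ∃ p' : GoodTriple q PI PE PD, StepRel p p' := by
  classical
  have hqc : Continuous q := AddMonoidHomClass.continuous_of_bound q 1
    (by simpa using fun x => NonUnitalStarAlgHom.norm_apply_le q x)
  -- countable set whose closure contains D'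
  have hDDsep : IsSeparable (p.DD : Set D) := (sepSpace_iff_isSeparable p.DD).mp p.hDs
  obtain ⟨c, hc_count, hc_cl⟩ := id hDDsep
  set L : Set E := Function.surjInv hq '' c with hL
  have hqL : q '' L = c := by
    rw [hL, Set.image_image]
    have : ∀ d, q (Function.surjInv hq d) = d := fun d => Function.surjInv_eq hq d
    simp [this]
  -- the E-stage
  set sE : Set E := (p.EE : Set E) ∪ (p.I : Set E) ∪ L with hsE
  have hsE_sep : IsSeparable sE :=
    (((sepSpace_iff_isSeparable p.EE).mp p.hEs).union
      ((sepSpace_iff_isSeparable p.I).mp p.hIs)).union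
      (hc_count.image _).isSeparable
  set E1 : NonUnitalStarSubalgebra ℂ E :=
    (NonUnitalStarAlgebra.adjoin ℂ sE).topologicalClosure with hE1
  have hE1c : IsClosed (E1 : Set E) :=
    (NonUnitalStarAlgebra.adjoin ℂ sE).isClosed_topologicalClosure
  have hE1sep : IsSeparable (E1 : Set E) := (isSeparable_adjoin hsE_sep).closure
  have hsE_sub : sE ⊆ (E1 : Set E) :=
    (NonUnitalStarAlgebra.subset_adjoin ℂ sE).trans
      (NonUnitalStarAlgebra.adjoin ℂ sE).le_topologicalClosure
  obtain ⟨E2, hE2c, hE2s, hE12, hE2P⟩ :=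
    hEsep E1 hE1c ((sepSpace_iff_isSeparable E1).mpr hE1sep)
  have hsE_sub2 : sE ⊆ (E2 : Set E) := hsE_sub.trans hE12
  have hE2img : IsClosed (q '' (E2 : Set E)) := isClosed_image_of_isClosed q E2 hE2c
  have hD'sub : (p.DD : Set D) ⊆ q '' (E2 : Set E) := by
    refine hc_cl.trans ?_
    rw [← hqL]
    refine closure_minimal (Set.image_mono (f := q) ?_) hE2img
    exact fun x hx => hsE_sub2 (Or.inr hx)
  -- the D-stage
  set sD : Set D := (p.DD : Set D) ∪ q '' (E2 : Set E) with hsD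
  have hsD_sep : IsSeparable sD :=
    hDDsep.union (((sepSpace_iff_isSeparable E2).mp hE2s).image hqc)
  set D1 : NonUnitalStarSubalgebra ℂ D :=
    (NonUnitalStarAlgebra.adjoin ℂ sD).topologicalClosure with hD1
  have hD1c : IsClosed (D1 : Set D) :=
    (NonUnitalStarAlgebra.adjoin ℂ sD).isClosed_topologicalClosure
  have hsD_sub : sD ⊆ (D1 : Set D) :=
    (NonUnitalStarAlgebra.subset_adjoin ℂ sD).trans
      (NonUnitalStarAlgebra.adjoin ℂ sD).le_topologicalClosure
  obtain ⟨D2, hD2c, hD2s, hD12, hD2P⟩ :=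
    hDsep D1 hD1c ((sepSpace_iff_isSeparable D1).mpr (isSeparable_adjoin hsD_sep).closure)
  -- the I-stage
  set sI : Set E := (p.I : Set E) ∪ ((E2 : Set E) ∩ {x | q x = 0}) with hsI
  have hsI_sep : IsSeparable sI :=
    ((sepSpace_iff_isSeparable p.I).mp p.hIs).union
      (((sepSpace_iff_isSeparable E2).mp hE2s).mono Set.inter_subset_left)
  have hsI_ker : sI ⊆ {x | q x = 0} := by
    rintro x (hx | hx)
    · exact p.hIker hx
    · exact hx.2
  set I1 : NonUnitalStarSubalgebra ℂ E :=
    (NonUnitalStarAlgebra.adjoin ℂ sI).topologicalClosure with hI1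
  have hI1c : IsClosed (I1 : Set E) :=
    (NonUnitalStarAlgebra.adjoin ℂ sI).isClosed_topologicalClosure
  have hI1ker : (I1 : Set E) ⊆ {x | q x = 0} := by
    have h1 : NonUnitalStarAlgebra.adjoin ℂ sI ≤ kerSub q :=
      NonUnitalStarAlgebra.adjoin_le hsI_ker
    have := NonUnitalStarSubalgebra.topologicalClosure_minimal _ h1 (isClosed_kerSub q)
    exact fun x hx => this hx
  have hsI_sub : sI ⊆ (I1 : Set E) :=
    (NonUnitalStarAlgebra.subset_adjoin ℂ sI).trans
      (NonUnitalStarAlgebra.adjoin ℂ sI).le_topologicalClosure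
  obtain ⟨I2, hI2c, hI2ker, hI2s, hI12, hI2P⟩ :=
    hIsep I1 hI1ker hI1c ((sepSpace_iff_isSeparable I1).mpr (isSeparable_adjoin hsI_sep).closure)
  refine ⟨⟨I2, E2, D2, hI2c, hE2c, hD2c, hI2s, hE2s, hD2s, hI2ker, hI2P, hE2P, hD2P⟩,
    ?_, ?_, ?_, ?_, ?_, ?_, ?_⟩
  · exact fun x hx => hI12 (hsI_sub (Or.inl hx))
  · exact fun x hx => hsE_sub2 (Or.inl (Or.inl hx))
  · exact fun x hx => hD12 (hsD_sub (Or.inl hx))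
  · exact fun x hx => hsE_sub2 (Or.inl (Or.inr hx))
  · exact fun x hx => hI12 (hsI_sub (Or.inr hx))
  · exact hD'sub
  · exact fun y hy => hD12 (hsD_sub (Or.inr hy))

end Step

/-- Given a surjective *-homomorphism `q : E → D` with kernel `I`,
properties `P_I, P_E, P_D` of separable C*-algebras preserved under sequential inductive
limits with injective connecting maps, such that `I` separably satisfies `P_I` (phrased via
closed star-subalgebras of `E` contained in `ker q`), `E` separably satisfies `P_E`, and `D`
separably satisfies `P_D`, then any given separable closed star-subalgebras
`I₀ ⊆ I`, `E₀ ⊆ E`, `D₀ ⊆ D` are contained in separable closed star-subalgebras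
`Ihat`, `Ehat`, `Dhat` satisfying the respective properties, with `q(Ehat) = Dhat` and
`Ihat = Ehat ∩ I`, giving a homomorphism of extensions. -/
theorem separable_subextension
    {E D : Type u} [NonUnitalCStarAlgebra E] [NonUnitalCStarAlgebra D]
    (q : E →⋆ₙₐ[ℂ] D) (hq : Function.Surjective q)
    (PI PE PD : CStarProp.{u})
    (hPIiso : PI.IsoInvariant) (hPEiso : PE.IsoInvariant) (hPDiso : PD.IsoInvariant)
    (hPIlim : LimitClosed PI) (hPElim : LimitClosed PE) (hPDlim : LimitClosed PD)
    -- `I = ker q` separably satisfies `P_I`: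
    (hIsep : ∀ S₀ : NonUnitalStarSubalgebra ℂ E, (S₀ : Set E) ⊆ {x | q x = 0} →
      IsClosed (S₀ : Set E) → SeparableSpace S₀ →
      ∃ (S : NonUnitalStarSubalgebra ℂ E) (hS : IsClosed (S : Set E)),
        (S : Set E) ⊆ {x | q x = 0} ∧ SeparableSpace S ∧ S₀ ≤ S ∧ SatSub PI S hS)
    (hEsep : SepSat PE E) (hDsep : SepSat PD D)
    (I₀ E₀ : NonUnitalStarSubalgebra ℂ E) (D₀ : NonUnitalStarSubalgebra ℂ D)
    (hI₀ker : (I₀ : Set E) ⊆ {x | q x = 0})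
    (hI₀c : IsClosed (I₀ : Set E)) (hI₀s : SeparableSpace I₀)
    (hE₀c : IsClosed (E₀ : Set E)) (hE₀s : SeparableSpace E₀)
    (hD₀c : IsClosed (D₀ : Set D)) (hD₀s : SeparableSpace D₀) :
    ∃ (Ihat Ehat : NonUnitalStarSubalgebra ℂ E) (Dhat : NonUnitalStarSubalgebra ℂ D)
      (hIhat : IsClosed (Ihat : Set E)) (hEhat : IsClosed (Ehat : Set E))
      (hDhat : IsClosed (Dhat : Set D)),
      SeparableSpace Ihat ∧ SeparableSpace Ehat ∧ SeparableSpace Dhat ∧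
      I₀ ≤ Ihat ∧ E₀ ≤ Ehat ∧ D₀ ≤ Dhat ∧
      SatSub PI Ihat hIhat ∧ SatSub PE Ehat hEhat ∧ SatSub PD Dhat hDhat ∧
      (Dhat : Set D) = q '' (Ehat : Set E) ∧
      (Ihat : Set E) = (Ehat : Set E) ∩ {x | q x = 0} := by
  classical
  have hqc : Continuous q := AddMonoidHomClass.continuous_of_bound q 1
    (by simpa using fun x => NonUnitalStarAlgHom.norm_apply_le q x)
  obtain ⟨Ib, hIbc, hIbker, hIbs, hIble, hIbP⟩ := hIsep I₀ hI₀ker hI₀c hI₀s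
  obtain ⟨Eb, hEbc, hEbs, hEble, hEbP⟩ := hEsep E₀ hE₀c hE₀s
  obtain ⟨Db, hDbc, hDbs, hDble, hDbP⟩ := hDsep D₀ hD₀c hD₀s
  set p0 : GoodTriple q PI PE PD :=
    ⟨Ib, Eb, Db, hIbc, hEbc, hDbc, hIbs, hEbs, hDbs, hIbker, hIbP, hEbP, hDbP⟩ with hp0
  obtain ⟨step, hstep⟩ := Classical.axiomOfChoice (step_exists hq hIsep hEsep hDsep)
  set F : ℕ → GoodTriple q PI PE PD := fun n => step^[n] p0 with hF
  have hF0 : F 0 = p0 := rfl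
  have hFrel : ∀ n, StepRel (F n) (F (n + 1)) := by
    intro n
    have : F (n + 1) = step (F n) := Function.iterate_succ_apply' step n p0
    rw [this]
    exact hstep (F n)
  have hImono : Monotone (fun n => (F n).I) := monotone_nat_of_le_succ fun n => (hFrel n).1
  have hEmono : Monotone (fun n => (F n).EE) := monotone_nat_of_le_succ fun n => (hFrel n).2.1
  have hDmono : Monotone (fun n => (F n).DD) :=
    monotone_nat_of_le_succ fun n => (hFrel n).2.2.1
  set Ihat := (unionSub (fun n => (F n).I) hImono).topologicalClosure with hIhat
  set Ehat := (unionSub (fun n => (F n).EE) hEmono).topologicalClosure with hEhat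
  set Dhat := (unionSub (fun n => (F n).DD) hDmono).topologicalClosure with hDhat
  have hIcoe : (Ihat : Set E) = closure (⋃ n, ((F n).I : Set E)) := rfl
  have hEcoe : (Ehat : Set E) = closure (⋃ n, ((F n).EE : Set E)) := rfl
  have hDcoe : (Dhat : Set D) = closure (⋃ n, ((F n).DD : Set D)) := rfl
  have hIhatc : IsClosed (Ihat : Set E) := by rw [hIcoe]; exact isClosed_closure
  have hEhatc : IsClosed (Ehat : Set E) := by rw [hEcoe]; exact isClosed_closure
  have hDhatc : IsClosed (Dhat : Set D) := by rw [hDcoe]; exact isClosed_closure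
  have hIhats : SeparableSpace Ihat := by
    refine (sepSpace_iff_isSeparable Ihat).mpr ?_
    rw [hIcoe]
    exact (IsSeparable.iUnion fun n =>
      (sepSpace_iff_isSeparable (F n).I).mp (F n).hIs).closure
  have hEhats : SeparableSpace Ehat := by
    refine (sepSpace_iff_isSeparable Ehat).mpr ?_
    rw [hEcoe]
    exact (IsSeparable.iUnion fun n =>
      (sepSpace_iff_isSeparable (F n).EE).mp (F n).hEs).closure
  have hDhats : SeparableSpace Dhat := by
    refine (sepSpace_iff_isSeparable Dhat).mpr ?_
    rw [hDcoe]
    exact (IsSeparable.iUnion fun n =>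
      (sepSpace_iff_isSeparable (F n).DD).mp (F n).hDs).closure
  have hIle : I₀ ≤ Ihat := hIble.trans fun x hx =>
    subset_closure (Set.mem_iUnion.mpr ⟨0, hx⟩)
  have hEle : E₀ ≤ Ehat := hEble.trans fun x hx =>
    subset_closure (Set.mem_iUnion.mpr ⟨0, hx⟩)
  have hDle : D₀ ≤ Dhat := hDble.trans fun x hx =>
    subset_closure (Set.mem_iUnion.mpr ⟨0, hx⟩)
  have hIP : SatSub PI Ihat hIhatc :=
    hPIlim E (fun n => (F n).I) hImono (fun n => (F n).hIc) (fun n => (F n).hIs)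
      (fun n => (F n).hIP) Ihat hIcoe
  have hEP : SatSub PE Ehat hEhatc :=
    hPElim E (fun n => (F n).EE) hEmono (fun n => (F n).hEc) (fun n => (F n).hEs)
      (fun n => (F n).hEP) Ehat hEcoe
  have hDP : SatSub PD Dhat hDhatc :=
    hPDlim D (fun n => (F n).DD) hDmono (fun n => (F n).hDc) (fun n => (F n).hDs)
      (fun n => (F n).hDP) Dhat hDcoe
  have himg_closed : IsClosed (q '' (Ehat : Set E)) := isClosed_image_of_isClosed q Ehat hEhatc
  have hDeq : (Dhat : Set D) = q '' (Ehat : Set E) := by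
    apply Set.Subset.antisymm
    · rw [hDcoe]
      refine closure_minimal (Set.iUnion_subset fun n => ?_) himg_closed
      refine ((hFrel n).2.2.2.2.2.1).trans (Set.image_mono (f := q) ?_)
      exact fun x hx => subset_closure (Set.mem_iUnion.mpr ⟨n + 1, hx⟩)
    · rw [hEcoe, hDcoe]
      refine (image_closure_subset_closure_image hqc).trans (closure_mono ?_)
      rw [Set.image_iUnion]
      refine Set.iUnion_subset fun n => ?_
      have h1 : q '' ((F n).EE : Set E) ⊆ ((F (n + 1)).DD : Set D) :=
        (Set.image_mono (f := q) (hEmono (Nat.le_succ n))).trans (hFrel n).2.2.2.2.2.2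
      exact h1.trans (Set.subset_iUnion (fun k => ((F k).DD : Set D)) (n + 1))
  have hIeq : (Ihat : Set E) = (Ehat : Set E) ∩ {x | q x = 0} := by
    apply Set.Subset.antisymm
    · rw [hIcoe]
      refine closure_minimal (Set.iUnion_subset fun n x hx => ?_)
        (hEhatc.inter (isClosed_eq hqc continuous_const))
      refine ⟨?_, (F n).hIker hx⟩
      rw [hEcoe]
      exact subset_closure (Set.mem_iUnion.mpr ⟨n + 1, (hFrel n).2.2.2.1 hx⟩)
    · rintro x ⟨hxE, hxk⟩
      rw [hEcoe] at hxE
      rw [hIcoe]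
      rw [Metric.mem_closure_iff]
      intro ε hε
      obtain ⟨a, ha, hdist⟩ := Metric.mem_closure_iff.mp hxE (ε / 3) (by positivity)
      obtain ⟨m, ham⟩ := Set.mem_iUnion.mp ha
      have hqa : ‖q a‖ < ε / 3 := by
        have h2 : q a = q (a - x) := by
          rw [map_sub, show q x = 0 from hxk, sub_zero]
        rw [h2]
        refine lt_of_le_of_lt (NonUnitalStarAlgHom.norm_apply_le q (a - x)) ?_
        rwa [dist_eq_norm, norm_sub_rev] at hdist
      obtain ⟨b, hbS, hbk, hb⟩ := exists_kernel_approx q ((F m).EE) ((F m).hEc) ham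
        (show (0:ℝ) < ε / 3 by positivity)
      refine ⟨b, Set.mem_iUnion.mpr ⟨m + 1,
        (hFrel m).2.2.2.2.1 ⟨hEmono (Nat.le_succ m) hbS, hbk⟩⟩, ?_⟩
      rw [dist_eq_norm]
      calc ‖x - b‖ ≤ ‖x - a‖ + ‖a - b‖ := norm_sub_le_norm_sub_add_norm_sub x a b
        _ < ε / 3 + (ε / 3 + ε / 3) := by
            rw [← dist_eq_norm]
            have : ‖a - b‖ ≤ ‖q a‖ + ε / 3 := hb
            apply add_lt_add_of_lt_of_le hdist
            nlinarith
        _ = ε := by ring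
  exact ⟨Ihat, Ehat, Dhat, hIhatc, hEhatc, hDhatc, hIhats, hEhats, hDhats,
    hIle, hEle, hDle, hIP, hEP, hDP, hDeq, hIeq⟩
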